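/- Let Γ be a subgroup of S₄ × S₄ (the direct product of two copies of the group of permutations of a four-element set) such that both coordinate projections Γ → S₄ are surjective and Γ ≠ S₄ × S₄. Then sign(x) = sign(y) for every (x, y) ∈ Γ, where sign is the sign character of S₄. (This is the group-theoretic content of the linear-disjointness argument in Lemma 8.2: a proper fiber product of two copies of S₄ over a common quotient identifies the two sign characters, since every proper normal subgroup of S₄ lies in A₄ and every automorphism of a quotient of S₄ preserves the induced sign character.) -/
import Mathlib
open Equiv Equiv.Perm
set_option maxRecDepth 10000

instance : DecidablePred (Perm.IsSwap (α := Fin 4)) :=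
  fun f => decidable_of_iff (∃ x y, x ≠ y ∧ f = Equiv.swap x y) Iff.rfl

lemma aux1 : ∀ τ : Perm (Fin 4), Perm.sign τ = -1 →
    ∃ σ : Perm (Fin 4), (τ * (σ * τ^2 * σ⁻¹)).IsSwap := by decide

lemma aux2 : ∀ a b i j : Fin 4, a ≠ b → i ≠ j →
    ∃ σ : Perm (Fin 4), σ a = i ∧ σ b = j := by decide

/-- A normal subgroup of S₄ containing an odd permutation is everything. -/
lemma normal_top (N : Subgroup (Perm (Fin 4))) (hN : N.Normal) {τ : Perm (Fin 4)}
    (hτN : τ ∈ N) (hτ : Perm.sign τ = -1) : N = ⊤ := by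
  obtain ⟨σ, hsw⟩ := aux1 τ hτ
  have hw : τ * (σ * τ^2 * σ⁻¹) ∈ N := N.mul_mem hτN (hN.conj_mem _ (N.pow_mem hτN 2) σ)
  obtain ⟨a, b, hab, hab2⟩ := hsw
  rw [hab2] at hw
  rw [eq_top_iff, ← Equiv.Perm.closure_isSwap, Subgroup.closure_le]
  rintro s ⟨i, j, hij, rfl⟩
  obtain ⟨ρ, hρa, hρb⟩ := aux2 a b i j hab hij
  have := hN.conj_mem _ hw ρ
  rwa [← Equiv.swap_apply_apply, hρa, hρb] at this

lemma hom_triv (h : Perm (Fin 4) →* ℤˣ) (hs : h (Equiv.swap 0 1) = 1) : h = 1 := by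
  have hswaps : ∀ s : Perm (Fin 4), s.IsSwap → h s = 1 := by
    rintro s ⟨i, j, hij, rfl⟩
    obtain ⟨ρ, hρa, hρb⟩ := (by decide : ∀ i j : Fin 4, i ≠ j →
      ∃ σ : Perm (Fin 4), σ (0:Fin 4) = i ∧ σ (1:Fin 4) = j) i j hij
    rw [← hρa, ← hρb, Equiv.swap_apply_apply, map_mul, map_mul, hs, map_inv]
    group
  ext x
  have : x ∈ Subgroup.closure {σ : Perm (Fin 4) | σ.IsSwap} := by
    rw [Equiv.Perm.closure_isSwap]; trivial
  induction this using Subgroup.closure_induction with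
  | mem s hsw => simpa using hswaps s hsw
  | one => simp
  | mul a b _ _ ha hb => simp_all
  | inv a _ ha => simp_all

lemma hom_classify (h : Perm (Fin 4) →* ℤˣ) : h = 1 ∨ h = Equiv.Perm.sign := by
  rcases Int.units_eq_one_or (h (Equiv.swap 0 1)) with hs | hs
  · exact Or.inl (hom_triv h hs)
  · right
    have h2 : (h * Equiv.Perm.sign) = 1 := by
      apply hom_triv
      rw [MonoidHom.mul_apply, hs, Equiv.Perm.sign_swap (by decide)]
      decide
    ext x
    have := congrFun (congrArg DFunLike.coe h2) x
    rw [MonoidHom.mul_apply] at this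
    simp at this ⊢
    rcases Int.units_eq_one_or (Perm.sign x) with hx | hx <;>
      rcases Int.units_eq_one_or (h x) with hy | hy <;>
      rw [hx, hy] at this ⊢ <;> simp_all


/-- Group-theoretic content of Lemma 8.2: a proper subgroup of `S₄ × S₄` surjecting onto
both factors identifies the two sign characters. -/
theorem stmt13 (Γ : Subgroup (Equiv.Perm (Fin 4) × Equiv.Perm (Fin 4)))
    (h1 : ∀ x : Equiv.Perm (Fin 4), ∃ y : Equiv.Perm (Fin 4), (x, y) ∈ Γ)
    (h2 : ∀ y : Equiv.Perm (Fin 4), ∃ x : Equiv.Perm (Fin 4), (x, y) ∈ Γ)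
    (hne : Γ ≠ ⊤) :
    ∀ g ∈ Γ, Equiv.Perm.sign g.1 = Equiv.Perm.sign g.2 := by
  classical
  -- the second-coordinate kernel
  set N : Subgroup (Perm (Fin 4)) :=
    { carrier := {y | ((1 : Perm (Fin 4)), y) ∈ Γ}
      one_mem' := Γ.one_mem
      mul_mem' := fun {a b} ha hb => by
        have := Γ.mul_mem ha hb; simpa using this
      inv_mem' := fun {a} ha => by
        have := Γ.inv_mem ha; simpa using this } with hNdef
  have hmemN : ∀ y, y ∈ N ↔ ((1 : Perm (Fin 4)), y) ∈ Γ := fun y => Iff.rfl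
  have hN : N.Normal := by
    constructor
    intro n hn g
    obtain ⟨x, hx⟩ := h2 g
    have := Γ.mul_mem (Γ.mul_mem hx hn) (Γ.inv_mem hx)
    rw [hmemN]
    simpa using this
  -- every element of N is even
  have hNeven : ∀ y ∈ N, Perm.sign y = 1 := by
    by_contra hcon
    push_neg at hcon
    obtain ⟨τ, hτN, hτ⟩ := hcon
    have hτ' : Perm.sign τ = -1 :=
      (Int.units_eq_one_or _).resolve_left hτ
    have hNtop : N = ⊤ := normal_top N hN hτN hτ'
    apply hne
    rw [eq_top_iff]
    rintro ⟨a, b⟩ -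
    obtain ⟨y₀, hy₀⟩ := h1 a
    have hb : ((1 : Perm (Fin 4)), b * y₀⁻¹) ∈ Γ := by
      rw [← hmemN, hNtop]; trivial
    have := Γ.mul_mem hb hy₀
    simpa using this
  -- well-definedness of the sign of the second coordinate
  have wd : ∀ x y y' : Perm (Fin 4), (x, y) ∈ Γ → (x, y') ∈ Γ →
      Perm.sign y = Perm.sign y' := by
    intro x y y' hy hy'
    have h3 : ((1 : Perm (Fin 4)), y⁻¹ * y') ∈ Γ := by
      have := Γ.mul_mem (Γ.inv_mem hy) hy'
      simpa using this
    have := hNeven _ ((hmemN _).2 h3)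
    rw [map_mul, map_inv] at this
    exact (inv_mul_eq_one.mp this)
  -- the induced character
  set f : Perm (Fin 4) →* ℤˣ :=
    { toFun := fun x => Perm.sign (Classical.choose (h1 x))
      map_one' := hNeven _ ((hmemN _).2 (Classical.choose_spec (h1 1)))
      map_mul' := by
        intro x x'
        have hx := Classical.choose_spec (h1 x)
        have hx' := Classical.choose_spec (h1 x')
        have hxx' := Classical.choose_spec (h1 (x * x'))
        have hmul := Γ.mul_mem hx hx'
        have := wd _ _ _ hxx' hmul
        simpa using this } with hfdef
  have hfwd : ∀ x y, (x, y) ∈ Γ → f x = Perm.sign y := fun x y hxy =>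
    wd _ _ _ (Classical.choose_spec (h1 x)) hxy
  have hfsign : f = Equiv.Perm.sign := by
    rcases hom_classify f with hf | hf
    · exfalso
      obtain ⟨x, hx⟩ := h2 (Equiv.swap 0 1)
      have := hfwd x _ hx
      rw [hf, Equiv.Perm.sign_swap (by decide)] at this
      simp at this
    · exact hf
  rintro ⟨a, b⟩ hab
  have := hfwd a b hab
  rw [hfsign] at this
  exact this
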